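/- Mistake-cut ratio bound (core of the modified IMM analysis): Let Y ⊂ ℝ^d be a finite set containing points X' and centroids M' with a map c : X' → M'. Suppose all points of Y lie in a box ×_j [a_j, b_j] with ‖b−a‖₁ > 0, and let μ', μ'' ∈ M' be distinct. Then there exists a coordinate cut (j, τ) with τ ∈ [a_j, b_j] that separates μ' and μ'' such that the number of x ∈ X' separated from c(x) by the cut is at most (Σ_{x∈X'} ‖x − c(x)‖₁) / ‖μ' − μ''‖₁, provided ‖μ' − μ''‖₁ > 0. -/

import Mathlib

open MeasureTheory ENNReal

lemma xor_iff_Ico (u v τ : ℝ) :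
    Xor' (u ≤ τ) (v ≤ τ) ↔ τ ∈ Set.Ico (min u v) (max u v) := by
  unfold Xor'
  constructor
  · rintro (⟨h1, h2⟩ | ⟨h1, h2⟩)
    · exact ⟨le_trans (min_le_left _ _) h1,
        lt_of_lt_of_le (lt_of_not_ge h2) (le_max_right _ _)⟩
    · exact ⟨le_trans (min_le_right _ _) h1,
        lt_of_lt_of_le (lt_of_not_ge h2) (le_max_left _ _)⟩
  · rintro ⟨h1, h2⟩
    rcases le_total u v with h | h
    · rw [min_eq_left h] at h1; rw [max_eq_right h] at h2
      exact Or.inl ⟨h1, not_le.mpr h2⟩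
    · rw [min_eq_right h] at h1; rw [max_eq_left h] at h2
      exact Or.inr ⟨h1, not_le.mpr h2⟩

theorem stmt17 {dim : ℕ} {ι : Type*}
    (X' : Finset ι) (p c : ι → Fin dim → ℝ)
    (μ' μ'' : Fin dim → ℝ) (hμne : μ' ≠ μ'')
    (a b : Fin dim → ℝ)
    (hbox : ∀ j, (∀ i ∈ X', a j ≤ p i j ∧ p i j ≤ b j ∧ a j ≤ c i j ∧ c i j ≤ b j) ∧
      a j ≤ μ' j ∧ μ' j ≤ b j ∧ a j ≤ μ'' j ∧ μ'' j ≤ b j)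
    (hba : 0 < ∑ j, (b j - a j))
    (hμ : 0 < ∑ j, |μ' j - μ'' j|) :
    ∃ (j : Fin dim) (τ : ℝ), τ ∈ Set.Icc (a j) (b j) ∧
      Xor' (μ' j ≤ τ) (μ'' j ≤ τ) ∧
      ((X'.filter (fun i => Xor (p i j ≤ τ) (c i j ≤ τ))).card : ℝ) ≤
        (∑ i ∈ X', ∑ j', |p i j' - c i j'|) / (∑ j', |μ' j' - μ'' j'|) := by
  classical
  set A : ℝ := ∑ i ∈ X', ∑ j', |p i j' - c i j'| with hA
  set D : ℝ := ∑ j', |μ' j' - μ'' j'| with hD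
  have hA0 : 0 ≤ A := Finset.sum_nonneg fun i _ =>
    Finset.sum_nonneg fun j _ => abs_nonneg _
  by_contra hcon
  push_neg at hcon
  set N : ℕ := ⌊A / D⌋₊ + 1 with hN
  -- from negation: every separating cut makes at least N mistakes
  have hcard : ∀ (j : Fin dim) (τ : ℝ), τ ∈ Set.Icc (a j) (b j) →
      Xor' (μ' j ≤ τ) (μ'' j ≤ τ) →
      N ≤ (X'.filter (fun i => Xor (p i j ≤ τ) (c i j ≤ τ))).card := by
    intro j τ hτ hx
    have := hcon j τ hτ hx
    have hlt : A / D < ((X'.filter (fun i => Xor (p i j ≤ τ) (c i j ≤ τ))).card : ℝ) := this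
    have : ⌊A / D⌋₊ < (X'.filter (fun i => Xor (p i j ≤ τ) (c i j ≤ τ))).card :=
      Nat.floor_lt (div_nonneg hA0 hμ.le) |>.mpr hlt
    omega
  -- sets
  set S : ι → Fin dim → Set ℝ := fun i j =>
    Set.Ico (min (p i j) (c i j)) (max (p i j) (c i j)) with hS
  set T : Fin dim → Set ℝ := fun j =>
    Set.Ico (min (μ' j) (μ'' j)) (max (μ' j) (μ'' j)) with hT
  have hTsub : ∀ j, T j ⊆ Set.Icc (a j) (b j) := by
    intro j τ hτ
    obtain ⟨_, h1, h2, h3, h4⟩ := hbox j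
    exact ⟨le_trans (le_min h1 h3) hτ.1, le_trans hτ.2.le (max_le h2 h4)⟩
  -- key per-coordinate inequality
  have hkey : ∀ j : Fin dim,
      (N : ℝ≥0∞) * volume (T j) ≤ ∑ i ∈ X', ENNReal.ofReal |p i j - c i j| := by
    intro j
    have hmeas : ∀ i ∈ X', Measurable fun τ => (S i j).indicator (fun _ => (1 : ℝ≥0∞)) τ :=
      fun i _ => Measurable.indicator measurable_const measurableSet_Ico
    calc (N : ℝ≥0∞) * volume (T j)
        = ∫⁻ _ in T j, (N : ℝ≥0∞) := by rw [setLIntegral_const, mul_comm]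
      _ ≤ ∫⁻ τ in T j, ∑ i ∈ X', (S i j).indicator (fun _ => (1 : ℝ≥0∞)) τ := by
          apply setLIntegral_mono (Finset.measurable_sum _ hmeas)
          intro τ hτ
          have hx : Xor' (μ' j ≤ τ) (μ'' j ≤ τ) := (xor_iff_Ico _ _ _).mpr hτ
          have hcN := hcard j τ (hTsub j hτ) hx
          have hsum : ∑ i ∈ X', (S i j).indicator (fun _ => (1 : ℝ≥0∞)) τ =
              ((X'.filter (fun i => Xor (p i j ≤ τ) (c i j ≤ τ))).card : ℝ≥0∞) := by
            rw [Finset.card_filter, Nat.cast_sum]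
            apply Finset.sum_congr rfl
            intro i _
            by_cases h : Xor' (p i j ≤ τ) (c i j ≤ τ)
            · rw [Set.indicator_of_mem ((xor_iff_Ico _ _ _).mp h)]
              simp [h]
              unfold Xor' Xor at h; tauto
            · rw [Set.indicator_of_notMem (fun hm => h ((xor_iff_Ico _ _ _).mpr hm))]
              simp [h]
              unfold Xor' Xor at h; tauto
          rw [hsum]
          exact_mod_cast Nat.cast_le.mpr hcN
      _ = ∑ i ∈ X', ∫⁻ τ in T j, (S i j).indicator (fun _ => (1 : ℝ≥0∞)) τ :=
          lintegral_finset_sum' _ (fun i hi => (hmeas i hi).aemeasurable)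
      _ ≤ ∑ i ∈ X', ENNReal.ofReal |p i j - c i j| := by
          apply Finset.sum_le_sum
          intro i _
          rw [lintegral_indicator measurableSet_Ico, setLIntegral_one,
            Measure.restrict_apply measurableSet_Ico]
          calc volume (S i j ∩ T j)
              ≤ volume (S i j) := measure_mono Set.inter_subset_left
            _ = ENNReal.ofReal |p i j - c i j| := by
                rw [hS]
                simp only [Real.volume_Ico]
                rw [max_sub_min_eq_abs, abs_sub_comm]
  -- sum over coordinates
  have hsumj : (N : ℝ≥0∞) * ENNReal.ofReal D ≤ ENNReal.ofReal A := by
    have hDval : ENNReal.ofReal D = ∑ j, volume (T j) := by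
      rw [hD, ENNReal.ofReal_sum_of_nonneg (fun j _ => abs_nonneg _)]
      apply Finset.sum_congr rfl
      intro j _
      rw [hT]
      simp only [Real.volume_Ico]
      rw [max_sub_min_eq_abs, abs_sub_comm]
    have hAval : ENNReal.ofReal A = ∑ j, ∑ i ∈ X', ENNReal.ofReal |p i j - c i j| := by
      rw [hA, Finset.sum_comm, ENNReal.ofReal_sum_of_nonneg
        (fun j _ => Finset.sum_nonneg fun i _ => abs_nonneg _)]
      apply Finset.sum_congr rfl
      intro j _
      exact ENNReal.ofReal_sum_of_nonneg (fun i _ => abs_nonneg _)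
    rw [hDval, hAval, Finset.mul_sum]
    exact Finset.sum_le_sum fun j _ => hkey j
  -- convert back to reals
  have hfin : (N : ℝ≥0∞) * ENNReal.ofReal D ≠ ⊤ := by
    exact ENNReal.mul_ne_top (by simp) ENNReal.ofReal_ne_top
  have hreal : (N : ℝ) * D ≤ A := by
    have := ENNReal.toReal_mono ENNReal.ofReal_ne_top hsumj
    rw [ENNReal.toReal_mul, ENNReal.toReal_ofReal hμ.le,
      ENNReal.toReal_ofReal hA0] at this
    simpa using this
  have hgt : A < (N : ℝ) * D := by
    have h1 : A / D < (N : ℝ) := by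
      rw [hN]
      exact_mod_cast Nat.lt_floor_add_one (A / D)
    exact (div_lt_iff₀ hμ).mp h1
  linarith
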